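/- For all v, w ∈ P(n), the strict inequality v ≺_P w holds if and only if w can be obtained from v by applying a finite nonempty sequence of addition and/or swap operators (i.e., (v, w) lies in the transitive closure of the one-step relation in which a single addition operator A^(k) or a single swap operator S^(j,k) is applied). -/

import Mathlib

open Finset

/-- Cumulative sum: `x 0 + ... + x k`. -/
def cum {n : ℕ} (x : Fin n → ℤ) (k : Fin n) : ℤ := ∑ i ∈ Finset.Iic k, x i

/-- The partial order `⪯`: every partial sum of `x` is at most that of `y`. -/
def ple {n : ℕ} (x y : Fin n → ℤ) : Prop := ∀ k : Fin n, cum x k ≤ cum y k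

/-- Membership in `P(n)`: all entries are `1` or `-1`. -/
def isPM {n : ℕ} (v : Fin n → ℤ) : Prop := ∀ i, v i = 1 ∨ v i = -1

/-- Membership in `Q(n)`. -/
def inQ {n : ℕ} (v : Fin n → ℤ) : Prop := isPM v ∧ ¬ ple v 0 ∧ ¬ ple 0 v

/-- Standard inner product on `ℤ^n`. -/
def dotp {n : ℕ} (x y : Fin n → ℤ) : ℤ := ∑ i, x i * y i

/-- The ±1 vector of a subset `S`. -/
def pS {n : ℕ} (S : Finset (Fin n)) : Fin n → ℤ := fun i => if i ∈ S then 1 else -1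

/-- The vector `m_k`: first `k` entries 1, next `k+1` entries −1, rest 1 (0-indexed). -/
def mvec (n k : ℕ) : Fin n → ℤ := fun i => if i.val < k then 1 else if i.val < 2 * k + 1 then -1 else 1

/-- An instance of the partition problem: `c_1 ≥ c_2 ≥ ⋯ ≥ c_n ≥ 0`. -/
def monoc {n : ℕ} (c : Fin n → ℤ) : Prop := (∀ i j : Fin n, i ≤ j → c j ≤ c i) ∧ ∀ i, 0 ≤ c i

/-- One application of a single addition operator `A^(k)` or swap operator `S^(j,k)`. -/
def step {n : ℕ} (v w : Fin n → ℤ) : Prop :=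
  (∃ k : Fin n, v k = -1 ∧ w = Function.update v k 1) ∨
  (∃ j k : Fin n, j < k ∧ v j = -1 ∧ v k = 1 ∧
    w = Function.update (Function.update v j 1) k (-1))

lemma cum_update {n : ℕ} (v : Fin n → ℤ) (j : Fin n) (a : ℤ) (k : Fin n) :
    cum (Function.update v j a) k = cum v k + (if j ≤ k then a - v j else 0) := by
  unfold cum
  by_cases h : j ≤ k
  · have hj : j ∈ Finset.Iic k := Finset.mem_Iic.2 h
    rw [if_pos h, Finset.sum_update_of_mem hj, ← Finset.sum_erase_add _ _ hj,
        Finset.sdiff_singleton_eq_erase]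
    ring
  · rw [if_neg h, add_zero]
    refine Finset.sum_congr rfl fun i hi => ?_
    refine Function.update_of_ne ?_ _ _
    rintro rfl
    exact h (Finset.mem_Iic.1 hi)

lemma d_even {n : ℕ} {v w : Fin n → ℤ} (hv : isPM v) (hw : isPM w) (k : Fin n) :
    (2:ℤ) ∣ (cum w k - cum v k) := by
  have h : cum w k - cum v k = ∑ i ∈ Finset.Iic k, (w i - v i) := by
    unfold cum; rw [Finset.sum_sub_distrib]
  rw [h]
  exact Finset.dvd_sum fun i _ => by
    rcases hv i with h1|h1 <;> rcases hw i with h2|h2 <;> rw [h1, h2] <;> omega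

lemma isPM_update {n : ℕ} {v : Fin n → ℤ} (hv : isPM v) (j : Fin n) {a : ℤ}
    (ha : a = 1 ∨ a = -1) : isPM (Function.update v j a) := by
  intro i
  rcases eq_or_ne i j with rfl | h
  · simpa using ha
  · rw [Function.update_of_ne h]; exact hv i

lemma cum_swap {n : ℕ} {v : Fin n → ℤ} {j k : Fin n} (hjk : j < k)
    (hj : v j = -1) (hk : v k = 1) (m : Fin n) :
    cum (Function.update (Function.update v j 1) k (-1)) m
      = cum v m + (if j ≤ m then 2 else 0) + (if k ≤ m then -2 else 0) := by
  have hkj : k ≠ j := ne_of_gt hjk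
  rw [cum_update, cum_update, Function.update_of_ne hkj, hj, hk]
  split <;> split <;> ring

lemma step_props {n : ℕ} {v w : Fin n → ℤ} (hv : isPM v) (h : step v w) :
    isPM w ∧ ple v w ∧ ∃ k, cum v k < cum w k := by
  rcases h with ⟨k, hk, rfl⟩ | ⟨j, k, hjk, hj, hk, rfl⟩
  · refine ⟨isPM_update hv k (Or.inl rfl), fun m => ?_, ⟨k, ?_⟩⟩
    · rw [cum_update, hk]; split <;> omega
    · rw [cum_update, hk, if_pos (le_refl k)]; omega
  · refine ⟨isPM_update (isPM_update hv j (Or.inl rfl)) k (Or.inr rfl), fun m => ?_, ⟨j, ?_⟩⟩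
    · rw [cum_swap hjk hj hk]
      rcases le_or_gt k m with h2 | h2
      · rw [if_pos (le_trans hjk.le h2), if_pos h2]; omega
      · rw [if_neg (not_le.2 h2)]; split <;> omega
    · rw [cum_swap hjk hj hk, if_pos (le_refl j), if_neg (not_le.2 hjk)]; omega

lemma tg_props {n : ℕ} {v w : Fin n → ℤ} (h : Relation.TransGen step v w) (hv : isPM v) :
    isPM w ∧ ple v w ∧ ∃ k, cum v k < cum w k := by
  induction h with
  | single hs => exact step_props hv hs
  | tail _ hs ih =>
    obtain ⟨hb, hvb, k, hk⟩ := ih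
    obtain ⟨hw, hbw, -⟩ := step_props hb hs
    exact ⟨hw, fun m => le_trans (hvb m) (hbw m), k, lt_of_lt_of_le hk (hbw k)⟩

lemma forward_aux {n : ℕ} : ∀ N : ℕ, ∀ v w : Fin n → ℤ, isPM v → isPM w → ple v w → v ≠ w →
    (∑ k, (cum w k - cum v k)).toNat ≤ N → Relation.TransGen step v w := by
  intro N
  induction N using Nat.strong_induction_on with
  | _ N ih =>
  intro v w hv hw hle hne hN
  have hd0 : ∀ k, 0 ≤ cum w k - cum v k := fun k => by have := hle k; omega
  have hd2 : ∀ k, (2:ℤ) ∣ (cum w k - cum v k) := d_even hv hw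
  -- the first index where v and w differ
  set s : Finset (Fin n) := Finset.univ.filter (fun i => v i ≠ w i) with hs
  clear_value s
  have hsne : s.Nonempty := by
    obtain ⟨i, hi⟩ := Function.ne_iff.1 hne
    exact ⟨i, by simp [hs, hi]⟩
  set j : Fin n := s.min' hsne with hjdef
  clear_value j
  have hjmem : v j ≠ w j := by
    have h0 : j ∈ s := hjdef ▸ Finset.min'_mem s hsne
    rw [hs, Finset.mem_filter] at h0
    exact h0.2
  have hpre : ∀ i, i < j → v i = w i := by
    intro i hi
    by_contra hne'
    exact absurd (hjdef ▸ Finset.min'_le s i (by simp [hs, hne'])) (not_le.2 hi)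
  have hcumj : cum w j - cum v j = w j - v j := by
    have h : cum w j - cum v j = ∑ i ∈ Finset.Iic j, (w i - v i) := by
      unfold cum; rw [Finset.sum_sub_distrib]
    rw [h, ← Finset.Iio_insert, Finset.sum_insert (by simp)]
    have : ∑ i ∈ Finset.Iio j, (w i - v i) = 0 :=
      Finset.sum_eq_zero fun i hi => by
        have := hpre i (Finset.mem_Iio.1 hi); omega
    rw [this]; ring
  have hvj : v j = -1 := by
    rcases hv j with h1|h1 <;> rcases hw j with h2|h2 <;> [skip; skip; skip; skip] <;>
      first
      | (exfalso; have := hd0 j; omega)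
      | omega
  have hwj : w j = 1 := by
    rcases hw j with h2|h2
    · exact h2
    · exfalso; have := hd0 j; omega
  have hdj : cum w j - cum v j = 2 := by omega
  -- whether there is a zero-deficit index after j
  by_cases hz : ∃ k, j < k ∧ cum w k - cum v k = 0
  · -- swap case
    set t : Finset (Fin n) := Finset.univ.filter (fun k => j < k ∧ cum w k - cum v k = 0) with ht
    clear_value t
    have htne : t.Nonempty := by
      obtain ⟨k, hk1, hk2⟩ := hz
      exact ⟨k, by simp [ht, hk1, hk2]⟩
    set K : Fin n := t.min' htne with hKdef
    clear_value K
    have hKmem : j < K ∧ cum w K - cum v K = 0 := by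
      have h0 : K ∈ t := hKdef ▸ Finset.min'_mem t htne
      rw [ht, Finset.mem_filter] at h0
      exact h0.2
    have hKmin : ∀ k, j < k → k < K → cum w k - cum v k ≠ 0 := by
      intro k h1 h2 h3
      exact absurd (hKdef ▸ Finset.min'_le t k (by simp [ht, h1, h3])) (not_le.2 h2)
    have hdge2 : ∀ k, j ≤ k → k < K → 2 ≤ cum w k - cum v k := by
      intro k h1 h2
      rcases lt_or_eq_of_le h1 with h3 | h3
      · have h4 := hKmin k h3 h2
        have h5 := hd0 k
        obtain ⟨c, hc⟩ := hd2 k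
        omega
      · rw [← h3]; omega
    -- the predecessor of K
    have hK1 : 1 ≤ K.val := by
      have := hKmem.1
      omega
    set K' : Fin n := ⟨K.val - 1, by omega⟩ with hK'def
    clear_value K'
    have hK'lt : K' < K := by
      rw [Fin.lt_def]; simp [hK'def]; omega
    have hjK' : j ≤ K' := by
      have := hKmem.1
      rw [Fin.le_def]
      rw [Fin.lt_def] at this
      simp [hK'def]; omega
    have hIic : Finset.Iic K = insert K (Finset.Iic K') := by
      rw [← Finset.Iio_insert]
      congr 1
      ext i
      simp only [Finset.mem_Iio, Finset.mem_Iic, Fin.lt_def, Fin.le_def, hK'def]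
      omega
    have hKnot : K ∉ Finset.Iic K' := by
      simp only [Finset.mem_Iic]
      exact not_le.2 hK'lt
    have hcumK : ∀ x : Fin n → ℤ, cum x K = x K + cum x K' := by
      intro x; unfold cum; rw [hIic, Finset.sum_insert hKnot]
    have hdK' : 2 ≤ cum w K' - cum v K' := hdge2 K' hjK' hK'lt
    have hvK : v K = 1 := by
      have h1 := hKmem.2
      rw [hcumK v, hcumK w] at h1
      rcases hv K with h2|h2 <;> rcases hw K with h3|h3 <;> omega
    -- apply the swap operator
    set u := Function.update (Function.update v j 1) K (-1) with hu
    clear_value u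
    have hstep : step v u := Or.inr ⟨j, K, hKmem.1, hvj, hvK, hu⟩
    have hcu : ∀ m, cum u m = cum v m + (if j ≤ m then 2 else 0) + (if K ≤ m then -2 else 0) := by
      intro m; rw [hu]; exact cum_swap hKmem.1 hvj hvK m
    have hpleuw : ple u w := by
      intro m
      rw [hcu]
      rcases le_or_gt K m with h2 | h2
      · rw [if_pos (le_trans hKmem.1.le h2), if_pos h2]
        have := hle m; omega
      · rw [if_neg (not_le.2 h2)]
        by_cases h3 : j ≤ m
        · rw [if_pos h3]
          have := hdge2 m h3 h2; omega
        · rw [if_neg h3]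
          have := hle m; omega
    have hupm : isPM u := hu ▸ isPM_update (isPM_update hv j (Or.inl rfl)) K (Or.inr rfl)
    have h1 : ∑ k, (cum w k - cum u k)
        = (∑ k, (cum w k - cum v k))
          - ∑ k, ((if j ≤ k then (2:ℤ) else 0) + (if K ≤ k then -2 else 0)) := by
      rw [← Finset.sum_sub_distrib]
      exact Finset.sum_congr rfl fun k _ => by rw [hcu]; ring
    have h2 : (2:ℤ) ≤ ∑ k, ((if j ≤ k then (2:ℤ) else 0) + (if K ≤ k then -2 else 0)) := by
      have h3 := Finset.single_le_sum
        (f := fun k => (if j ≤ k then (2:ℤ) else 0) + (if K ≤ k then -2 else 0))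
        (fun i _ => by
          rcases le_or_gt K i with h4 | h4
          · rw [if_pos (le_trans hKmem.1.le h4), if_pos h4]; norm_num
          · rw [if_neg (not_le.2 h4)]; split <;> norm_num)
        (Finset.mem_univ j)
      rw [if_pos (le_refl j), if_neg (not_le.2 hKmem.1)] at h3
      linarith
    have hD'0 : 0 ≤ ∑ k, (cum w k - cum u k) :=
      Finset.sum_nonneg fun k _ => by have := hpleuw k; omega
    have hD0 : 0 ≤ ∑ k, (cum w k - cum v k) :=
      Finset.sum_nonneg fun k _ => hd0 k
    rcases eq_or_ne u w with rfl | hne'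
    · exact Relation.TransGen.single hstep
    · refine Relation.TransGen.head hstep
        (ih (∑ k, (cum w k - cum u k)).toNat (by omega) u w hupm hw hpleuw hne' le_rfl)
  · -- addition case
    push_neg at hz
    have hdge : ∀ k, j ≤ k → 2 ≤ cum w k - cum v k := by
      intro k h1
      rcases lt_or_eq_of_le h1 with h3 | h3
      · have h4 := hz k h3
        have h5 := hd0 k
        obtain ⟨c, hc⟩ := hd2 k
        omega
      · rw [← h3]; omega
    set u := Function.update v j 1 with hu
    clear_value u
    have hstep : step v u := Or.inl ⟨j, hvj, hu⟩
    have hcu : ∀ m, cum u m = cum v m + (if j ≤ m then 2 else 0) := by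
      intro m
      rw [hu, cum_update, hvj]
      split <;> ring
    have hpleuw : ple u w := by
      intro m
      rw [hcu]
      by_cases h3 : j ≤ m
      · rw [if_pos h3]
        have := hdge m h3; omega
      · rw [if_neg h3]
        have := hle m; omega
    have hupm : isPM u := hu ▸ isPM_update hv j (Or.inl rfl)
    have h1 : ∑ k, (cum w k - cum u k)
        = (∑ k, (cum w k - cum v k)) - ∑ k, (if j ≤ k then (2:ℤ) else 0) := by
      rw [← Finset.sum_sub_distrib]
      exact Finset.sum_congr rfl fun k _ => by rw [hcu]; ring
    have h2 : (2:ℤ) ≤ ∑ k, (if j ≤ k then (2:ℤ) else 0) := by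
      have h3 := Finset.single_le_sum
        (f := fun k => if j ≤ k then (2:ℤ) else 0)
        (fun i _ => by split <;> norm_num)
        (Finset.mem_univ j)
      rw [if_pos (le_refl j)] at h3
      linarith
    have hD'0 : 0 ≤ ∑ k, (cum w k - cum u k) :=
      Finset.sum_nonneg fun k _ => by have := hpleuw k; omega
    have hD0 : 0 ≤ ∑ k, (cum w k - cum v k) :=
      Finset.sum_nonneg fun k _ => hd0 k
    rcases eq_or_ne u w with rfl | hne'
    · exact Relation.TransGen.single hstep
    · refine Relation.TransGen.head hstep
        (ih (∑ k, (cum w k - cum u k)).toNat (by omega) u w hupm hw hpleuw hne' le_rfl)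

theorem stmt0 {n : ℕ} (v w : Fin n → ℤ) (hv : isPM v) (hw : isPM w) :
    (ple v w ∧ v ≠ w) ↔ Relation.TransGen step v w := by
  constructor
  · rintro ⟨h1, h2⟩
    exact forward_aux _ v w hv hw h1 h2 le_rfl
  · intro h
    obtain ⟨-, h1, k, hk⟩ := tg_props h hv
    refine ⟨h1, fun he => ?_⟩
    rw [he] at hk
    exact lt_irrefl _ hk
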